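/- Let ≿ be a monotonic and continuous preference relation on X. Then ≿ exhibits preference for naive diversification if and only if ≿ is convex and permutation invariant. -/

import Mathlib

open Finset Matrix MeasureTheory

/-- Sum of the `k` largest components of a vector in `ℝⁿ`. -/
noncomputable def topSum {n : ℕ} (a : Fin n → ℝ) (k : ℕ) : ℝ :=
  sSup {t : ℝ | ∃ s : Finset (Fin n), s.card = k ∧ t = ∑ i ∈ s, a i}

/-- `Majorizes b a` means `b` majorizes `a`, i.e. `a ≤_m b`. -/
def Majorizes {n : ℕ} (b a : Fin n → ℝ) : Prop :=
  (∑ i, a i = ∑ i, b i) ∧ ∀ k : ℕ, 1 ≤ k → k ≤ n - 1 → topSum a k ≤ topSum b k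

/-- Preference for naive diversification. -/
def PrefNaiveDiv {X : Type*} [AddCommGroup X] [Module ℝ X] (pref : X → X → Prop) : Prop :=
  ∀ (n : ℕ) (a b : Fin n → ℝ), a ∈ stdSimplex ℝ (Fin n) → b ∈ stdSimplex ℝ (Fin n) →
    Majorizes b a → ∀ x : Fin n → X, pref (∑ i, a i • x i) (∑ i, b i • x i)

/-- A permutation matrix. -/
def IsPermMatrix {n : ℕ} (P : Matrix (Fin n) (Fin n) ℝ) : Prop :=
  ∃ σ : Equiv.Perm (Fin n), ∀ i j, P i j = if σ i = j then 1 else 0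

/-- A convex preference relation: `x ≿ y` implies `t x + (1-t) y ≿ y` for `t ∈ (0,1)`. -/
def ConvexPref {X : Type*} [AddCommGroup X] [Module ℝ X] (pref : X → X → Prop) : Prop :=
  ∀ x y : X, pref x y → ∀ t : ℝ, 0 < t → t < 1 → pref (t • x + (1 - t) • y) y

/-- A permutation invariant preference relation. -/
def PermInvariant {X : Type*} [AddCommGroup X] [Module ℝ X] (pref : X → X → Prop) : Prop :=
  ∀ (n : ℕ) (a : Fin n → ℝ), a ∈ stdSimplex ℝ (Fin n) →
    ∀ P : Matrix (Fin n) (Fin n) ℝ, IsPermMatrix P → ∀ x : Fin n → X,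
      pref (∑ i, a i • x i) (∑ i, (a ᵥ* P) i • x i) ∧
        pref (∑ i, (a ᵥ* P) i • x i) (∑ i, a i • x i)

namespace NDAux
variable {n : ℕ}

lemma topSum_set_finite (a : Fin n → ℝ) (k : ℕ) :
    {t : ℝ | ∃ s : Finset (Fin n), s.card = k ∧ t = ∑ i ∈ s, a i}.Finite := by
  have : {t : ℝ | ∃ s : Finset (Fin n), s.card = k ∧ t = ∑ i ∈ s, a i} ⊆
      (fun s : Finset (Fin n) => ∑ i ∈ s, a i) '' Set.univ := by
    rintro t ⟨s, _, rfl⟩; exact ⟨s, trivial, rfl⟩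
  exact (Set.Finite.image _ Set.finite_univ).subset this

lemma le_topSum (a : Fin n → ℝ) {k : ℕ} {s : Finset (Fin n)} (hs : s.card = k) :
    ∑ i ∈ s, a i ≤ topSum a k :=
  le_csSup (topSum_set_finite a k).bddAbove ⟨s, hs, rfl⟩

lemma topSum_le (a : Fin n → ℝ) {k : ℕ} (hk : k ≤ n) {M : ℝ}
    (h : ∀ s : Finset (Fin n), s.card = k → ∑ i ∈ s, a i ≤ M) : topSum a k ≤ M := by
  obtain ⟨s, -, hs⟩ := Finset.exists_subset_card_eq (s := (Finset.univ : Finset (Fin n))) (n := k)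
    (by simpa using hk)
  exact csSup_le ⟨_, s, hs, rfl⟩ (by rintro t ⟨u, hu, rfl⟩; exact h u hu)

lemma topSum_comp_perm (a : Fin n → ℝ) (σ : Equiv.Perm (Fin n)) (k : ℕ) :
    topSum (a ∘ ⇑σ) k = topSum a k := by
  unfold topSum
  congr 1
  ext t
  constructor
  · rintro ⟨s, hs, rfl⟩
    refine ⟨s.image σ, by rw [Finset.card_image_of_injective _ σ.injective, hs], ?_⟩
    rw [Finset.sum_image (fun i _ j _ h => σ.injective h)]
    rfl
  · rintro ⟨s, hs, rfl⟩
    refine ⟨s.image σ.symm, by rw [Finset.card_image_of_injective _ σ.symm.injective, hs], ?_⟩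
    rw [Finset.sum_image (fun i _ j _ h => σ.symm.injective h)]
    simp [Function.comp]

lemma topSum_univ (a : Fin n → ℝ) : topSum a n = ∑ i, a i := by
  refine le_antisymm (topSum_le a le_rfl fun s hs => ?_) (le_topSum a (by simp))
  rw [Finset.eq_univ_of_card s (by simpa using hs)]


def pfx (n k : ℕ) : Finset (Fin n) := Finset.univ.filter (fun i : Fin n => i.1 < k)

lemma card_pfx {k : ℕ} (hk : k ≤ n) : (pfx n k).card = k := by
  classical
  rw [← Finset.card_range k]
  refine Finset.card_bij' (fun i _ => i.1) (fun m hm => ⟨m, lt_of_lt_of_le (Finset.mem_range.mp hm) hk⟩)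
    ?_ ?_ ?_ ?_
  · intro i hi; simp only [pfx, Finset.mem_filter] at hi; simpa using hi.2
  · intro m hm; simp [pfx, Finset.mem_range.mp hm]
  · intro i _; rfl
  · intro m _; rfl

lemma sum_pfx_eq (c : Fin n → ℝ) {k : ℕ} (hk : k ≤ n) :
    ∑ i ∈ Finset.range k, (if h : i < n then c ⟨i, h⟩ else 0) = ∑ i ∈ pfx n k, c i := by
  classical
  refine Finset.sum_bij' (fun m hm => (⟨m, lt_of_lt_of_le (Finset.mem_range.mp hm) hk⟩ : Fin n))
    (fun i _ => i.1) ?_ ?_ ?_ ?_ ?_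
  · intro m hm; simp [pfx, Finset.mem_range.mp hm]
  · intro i hi; simp only [pfx, Finset.mem_filter] at hi; exact Finset.mem_range.mpr hi.2
  · intro m _; rfl
  · intro i _; rfl
  · intro m hm; have : m < n := lt_of_lt_of_le (Finset.mem_range.mp hm) hk; simp [this]

lemma sum_le_pfx_of_antitone {a : Fin n → ℝ} (ha : Antitone a) {k : ℕ} (hk : k ≤ n)
    {s : Finset (Fin n)} (hs : s.card = k) : ∑ i ∈ s, a i ≤ ∑ i ∈ pfx n k, a i := by
  classical
  set P := pfx n k with hP
  have hcard : (s \ P).card = (P \ s).card :=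
    Finset.card_sdiff_comm (by rw [hs, card_pfx hk])
  have key : ∑ i ∈ s \ P, a i ≤ ∑ i ∈ P \ s, a i := by
    let e := Finset.equivOfCardEq hcard
    have h1 : ∑ i ∈ s \ P, a i = ∑ x : {x // x ∈ (s \ P)}, a x := (Finset.sum_coe_sort _ _).symm
    have h2 : ∑ i ∈ P \ s, a i = ∑ x : {x // x ∈ (P \ s)}, a x := (Finset.sum_coe_sort _ _).symm
    rw [h1, h2, ← Equiv.sum_comp e.symm (fun x : {x // x ∈ (s \ P)} => a x)]
    refine Finset.sum_le_sum fun y _ => ?_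
    have hy : (y : Fin n) ∈ P \ s := y.2
    have hey : ((e.symm y : {x // x ∈ (s \ P)}) : Fin n) ∈ s \ P := (e.symm y).2
    have hy' : (y : Fin n).1 < k := by
      have := (Finset.mem_sdiff.mp hy).1
      simpa [hP, pfx] using this
    have hey' : ¬ ((e.symm y : {x // x ∈ (s \ P)}) : Fin n).1 < k := by
      have := (Finset.mem_sdiff.mp hey).2
      simpa [hP, pfx] using this
    exact ha (by omega : (y : Fin n) ≤ ((e.symm y : {x // x ∈ (s \ P)}) : Fin n))
  calc ∑ i ∈ s, a i = ∑ i ∈ s ∩ P, a i + ∑ i ∈ s \ P, a i := (Finset.sum_inter_add_sum_sdiff s P _).symm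
    _ ≤ ∑ i ∈ s ∩ P, a i + ∑ i ∈ P \ s, a i := by linarith
    _ = ∑ i ∈ P ∩ s, a i + ∑ i ∈ P \ s, a i := by rw [Finset.inter_comm]
    _ = ∑ i ∈ P, a i := Finset.sum_inter_add_sum_sdiff P s _

lemma topSum_antitone_eq {a : Fin n → ℝ} (ha : Antitone a) {k : ℕ} (hk : k ≤ n) :
    topSum a k = ∑ i ∈ pfx n k, a i :=
  le_antisymm (topSum_le a hk fun _ hs => sum_le_pfx_of_antitone ha hk hs)
    (le_topSum a (card_pfx hk))

/-- sorting: an antitone rearrangement -/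
lemma exists_antitone_perm (c : Fin n → ℝ) :
    ∃ σ : Equiv.Perm (Fin n), Antitone (c ∘ ⇑σ) := by
  refine ⟨Tuple.sort (fun i => -(c i)), ?_⟩
  have h := Tuple.monotone_sort (fun i => -(c i))
  intro i j hij
  have := h hij
  simpa using this

theorem mem_convexHull_perms {a b : Fin n → ℝ} (h : Majorizes b a) :
    a ∈ convexHull ℝ {c : Fin n → ℝ | ∃ σ : Equiv.Perm (Fin n), c = b ∘ ⇑σ} := by
  classical
  by_contra h0
  set S : Set (Fin n → ℝ) := {c : Fin n → ℝ | ∃ σ : Equiv.Perm (Fin n), c = b ∘ ⇑σ} with hS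
  have hSfin : S.Finite := by
    have : S = Set.range (fun σ : Equiv.Perm (Fin n) => b ∘ ⇑σ) := by
      ext c; simp [hS, Set.mem_setOf_eq, eq_comm]
    rw [this]; exact Set.finite_range _
  have hclosed : IsClosed (convexHull ℝ S) := (hSfin.isCompact_convexHull (𝕜 := ℝ)).isClosed
  obtain ⟨f, u, hfS, hfa⟩ :=
    geometric_hahn_banach_closed_point (convex_convexHull ℝ S) hclosed h0
  -- linear functional as weights
  set w : Fin n → ℝ := fun i => f (Pi.single i 1 : Fin n → ℝ) with hw
  have hf : ∀ c : Fin n → ℝ, f c = ∑ i, c i * w i := by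
    intro c
    have hc : c = ∑ i, Pi.single i (c i) := by
      rw [Finset.univ_sum_single]
    conv_lhs => rw [hc]
    rw [map_sum]
    refine Finset.sum_congr rfl fun i _ => ?_
    have : (Pi.single i (c i) : Fin n → ℝ) = c i • (Pi.single i 1 : Fin n → ℝ) := by
      rw [← Pi.single_smul, smul_eq_mul, mul_one]
    rw [this, _root_.map_smul, smul_eq_mul, hw]
  -- sorting permutations
  obtain ⟨ρ, hρ⟩ := exists_antitone_perm w
  obtain ⟨τ, hτ⟩ := exists_antitone_perm a
  obtain ⟨β, hβ⟩ := exists_antitone_perm b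
  set W := w ∘ ⇑ρ with hW
  set A := a ∘ ⇑τ with hA
  set B := b ∘ ⇑β with hB
  -- step 1: f (b ∘ σ₀) = ∑ B j * W j for σ₀ = ρ.symm.trans β
  have h1 : ∑ j, B j * W j < u := by
    have hmem : (b ∘ ⇑(ρ.symm.trans β)) ∈ convexHull ℝ S :=
      subset_convexHull ℝ S ⟨ρ.symm.trans β, rfl⟩
    have := hfS _ hmem
    rw [hf] at this
    calc ∑ j, B j * W j = ∑ j, (b ∘ ⇑(ρ.symm.trans β)) (ρ j) * w (ρ j) := by
          refine Finset.sum_congr rfl fun j _ => ?_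
          simp [hB, hW, Equiv.trans_apply]
      _ = ∑ i, (b ∘ ⇑(ρ.symm.trans β)) i * w i := Equiv.sum_comp ρ (fun i => (b ∘ ⇑(ρ.symm.trans β)) i * w i)
      _ < u := this
  -- step 2: u < f a ≤ ∑ A j * W j  (rearrangement)
  have h2 : u < ∑ j, A j * W j := by
    have hmono : Monovary W A := by
      intro i j hij
      rcases le_or_gt i j with hle | hlt
      · exact absurd (hA ▸ hτ hle) (not_le.mpr hij)
      · exact hρ hlt.le
    have hre : ∑ j, W j • A ((ρ.trans τ.symm) j) ≤ ∑ j, W j • A j :=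
      hmono.sum_smul_comp_perm_le_sum_smul
    have heq : f a = ∑ j, W j • A ((ρ.trans τ.symm) j) := by
      rw [hf]
      rw [← Equiv.sum_comp ρ (fun i => a i * w i)]
      refine Finset.sum_congr rfl fun j _ => ?_
      simp [hA, hW, Equiv.trans_apply, smul_eq_mul, mul_comm]
    have := hfa
    rw [heq] at this
    refine this.trans_le (le_of_le_of_eq hre ?_)
    simp [smul_eq_mul, mul_comm]
  -- step 3: Abel summation gives ∑ A j * W j ≤ ∑ B j * W j
  have h3 : ∑ j, A j * W j ≤ ∑ j, B j * W j := by
    set A' : ℕ → ℝ := fun m => if h : m < n then A ⟨m, h⟩ else 0 with hA'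
    set B' : ℕ → ℝ := fun m => if h : m < n then B ⟨m, h⟩ else 0 with hB'
    set W' : ℕ → ℝ := fun m => if h : m < n then W ⟨m, h⟩ else 0 with hW'
    set d : ℕ → ℝ := fun m => B' m - A' m with hd
    have hprefix : ∀ k : ℕ, k ≤ n →
        ∑ i ∈ Finset.range k, d i = topSum b k - topSum a k := by
      intro k hk
      have hAk : ∑ i ∈ Finset.range k, A' i = topSum a k := by
        simp only [hA']
        rw [sum_pfx_eq A hk, ← topSum_antitone_eq hτ hk, hA, topSum_comp_perm]
      have hBk : ∑ i ∈ Finset.range k, B' i = topSum b k := by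
        simp only [hB']
        rw [sum_pfx_eq B hk, ← topSum_antitone_eq hβ hk, hB, topSum_comp_perm]
      simp only [hd]
      rw [Finset.sum_sub_distrib, hAk, hBk]
    have habel : ∑ i ∈ Finset.range n, W' i • d i =
        W' (n - 1) • (∑ i ∈ Finset.range n, d i) -
          ∑ i ∈ Finset.range (n - 1), (W' (i + 1) - W' i) • (∑ j ∈ Finset.range (i + 1), d j) :=
      Finset.sum_range_by_parts W' d n
    have hDn : ∑ i ∈ Finset.range n, d i = 0 := by
      rw [hprefix n le_rfl, topSum_univ, topSum_univ, h.1, sub_self]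
    have hterm : ∀ i ∈ Finset.range (n - 1),
        0 ≤ -((W' (i + 1) - W' i) • (∑ j ∈ Finset.range (i + 1), d j)) := by
      intro i hi
      have hi' : i + 1 ≤ n - 1 := Finset.mem_range.mp hi
      have hin : i + 1 < n := by omega
      have hWle : W' (i + 1) ≤ W' i := by
        have h1 : i < n := by omega
        simp only [hW', dif_pos hin, dif_pos h1]
        exact hρ (by simp [Fin.le_def])
      have hDpos : 0 ≤ ∑ j ∈ Finset.range (i + 1), d j := by
        rw [hprefix (i + 1) (by omega)]
        have := h.2 (i + 1) (by omega) hi'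
        linarith
      have : (W' (i + 1) - W' i) • (∑ j ∈ Finset.range (i + 1), d j) ≤ 0 :=
        smul_nonpos_of_nonpos_of_nonneg (by linarith) hDpos
      linarith
    have hsum_nonneg : 0 ≤ ∑ i ∈ Finset.range n, W' i • d i := by
      rw [habel, hDn, smul_zero, zero_sub]
      rw [← Finset.sum_neg_distrib]
      exact Finset.sum_nonneg hterm
    have hconv : ∑ i ∈ Finset.range n, W' i • d i = (∑ j, B j * W j) - ∑ j, A j * W j := by
      rw [← Fin.sum_univ_eq_sum_range (fun i => W' i • d i) n]
      rw [← Finset.sum_sub_distrib]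
      refine Finset.sum_congr rfl fun j _ => ?_
      simp [hW', hA', hB', hd, j.2, smul_eq_mul]
      ring
    linarith [hconv ▸ hsum_nonneg]
  linarith


/-- vecMul -/
lemma vecMul_permMatrix {n : ℕ} (a : Fin n → ℝ) (σ : Equiv.Perm (Fin n)) :
    a ᵥ* (Matrix.of fun i j => if σ i = j then (1:ℝ) else 0) = a ∘ ⇑σ.symm := by
  funext j
  simp only [Matrix.vecMul, dotProduct, Matrix.of_apply, mul_ite, mul_one, mul_zero]
  simp [Equiv.apply_eq_iff_eq_symm_apply]

end NDAux

/-- A monotonic and continuous preference relation on `X = L^∞(Ω, F, ℙ)` exhibits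
preference for naive diversification if and only if it is convex and permutation
invariant. -/
theorem naiveDiv_iff_convex_permInvariant
    {Ω : Type*} [MeasurableSpace Ω] (ℙ : Measure Ω) [IsProbabilityMeasure ℙ]
    (pref : Lp ℝ ⊤ ℙ → Lp ℝ ⊤ ℙ → Prop)
    (hcomplete : ∀ x y : Lp ℝ ⊤ ℙ, pref x y ∨ pref y x)
    (htrans : ∀ x y z : Lp ℝ ⊤ ℙ, pref x y → pref y z → pref x z)
    (hmono : ∀ x y : Lp ℝ ⊤ ℙ, y ≤ x → pref x y)
    (hcont : ∀ x y : Lp ℝ ⊤ ℙ, pref x y → ¬ pref y x →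
      ∃ U ∈ nhds x, ∃ V ∈ nhds y, ∀ x' ∈ U, ∀ y' ∈ V, pref x' y' ∧ ¬ pref y' x') :
    PrefNaiveDiv pref ↔ (ConvexPref pref ∧ PermInvariant pref) := by
  have hrefl : ∀ x : Lp ℝ ⊤ ℙ, pref x x := fun x => (hcomplete x x).elim id id
  constructor
  · intro hnd
    constructor
    · -- convexity
      intro x y hxy t ht0 ht1
      have key := hnd 2 ![t, 1 - t] ![1, 0] ?_ ?_ ?_ ![x, y]
      · rw [Fin.sum_univ_two, Fin.sum_univ_two] at key
        simp only [Matrix.cons_val_zero, Matrix.cons_val_one, Matrix.head_cons,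
          one_smul, zero_smul, add_zero] at key
        exact htrans _ _ _ key hxy
      · constructor
        · intro i; fin_cases i <;> simp <;> linarith
        · simp [Fin.sum_univ_two]
      · constructor
        · intro i; fin_cases i <;> simp
        · simp [Fin.sum_univ_two]
      · constructor
        · simp [Fin.sum_univ_two]
        · intro k hk1 hk2
          have hk : k = 1 := by omega
          subst hk
          have h1 : topSum ![t, 1 - t] 1 ≤ 1 := by
            refine NDAux.topSum_le _ (by omega) fun s hs => ?_
            obtain ⟨i, rfl⟩ := Finset.card_eq_one.mp hs
            rw [Finset.sum_singleton]
            fin_cases i <;> simp <;> linarith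
          have h2 : (1:ℝ) ≤ topSum ![1, 0] 1 := by
            have := NDAux.le_topSum ![ (1:ℝ), 0] (s := {0}) (Finset.card_singleton 0)
            simpa using this
          linarith
    · -- permutation invariance
      intro n a ha P hP x
      obtain ⟨σ, hσ⟩ := hP
      have hvm : a ᵥ* P = a ∘ ⇑σ.symm := by
        have : P = Matrix.of fun i j => if σ i = j then (1:ℝ) else 0 := by
          ext i j; exact hσ i j
        rw [this]; exact NDAux.vecMul_permMatrix a σ
      have haP : (a ᵥ* P) ∈ stdSimplex ℝ (Fin n) := by
        rw [hvm]
        refine ⟨fun j => ha.1 _, ?_⟩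
        simp only [Function.comp_apply]
        rw [Equiv.sum_comp σ.symm a]
        exact ha.2
      have hsum : ∑ i, a i = ∑ i, (a ᵥ* P) i := by
        rw [hvm]
        simp only [Function.comp_apply]
        exact (Equiv.sum_comp σ.symm a).symm
      have htop : ∀ k, topSum (a ᵥ* P) k = topSum a k := by
        intro k; rw [hvm]; exact NDAux.topSum_comp_perm a σ.symm k
      constructor
      · exact hnd n a (a ᵥ* P) ha haP ⟨hsum, fun k _ _ => (htop k).symm.le⟩ x
      · exact hnd n (a ᵥ* P) a haP ha ⟨hsum.symm, fun k _ _ => (htop k).le⟩ x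
  · rintro ⟨hconv, hperm⟩
    intro n a b ha hb hmaj x
    set Y := ∑ i, b i • x i with hY
    -- the upper contour set pulled back
    set U : Set (Fin n → ℝ) := {c | pref (∑ i, c i • x i) Y} with hU
    have hcomb : ∀ (s t : ℝ) (c c' : Fin n → ℝ),
        ∑ i, (s • c + t • c') i • x i = s • ∑ i, c i • x i + t • ∑ i, c' i • x i := by
      intro s t c c'
      rw [Finset.smul_sum, Finset.smul_sum, ← Finset.sum_add_distrib]
      refine Finset.sum_congr rfl fun i _ => ?_
      simp [add_smul, smul_smul]
    have hUconv : Convex ℝ U := by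
      intro c hc c' hc' s t hs ht hst
      simp only [hU, Set.mem_setOf_eq] at hc hc' ⊢
      rw [hcomb]
      rcases eq_or_lt_of_le hs with hs0 | hs0
      · have : t = 1 := by linarith
        rw [← hs0, this]; simpa using hc'
      rcases eq_or_lt_of_le ht with ht0 | ht0
      · have : s = 1 := by linarith
        rw [← ht0, this]; simpa using hc
      have hs1 : s < 1 := by linarith
      have hteq : t = 1 - s := by linarith
      rcases hcomplete (∑ i, c i • x i) (∑ i, c' i • x i) with h | h
      · have := hconv _ _ h s hs0 hs1
        rw [← hteq] at this
        exact htrans _ _ _ this hc'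
      · have := hconv _ _ h t ht0 (by linarith)
        have ht1 : (1:ℝ) - t = s := by linarith
        rw [ht1] at this
        rw [add_comm]
        exact htrans _ _ _ this hc
    have hSU : {c : Fin n → ℝ | ∃ σ : Equiv.Perm (Fin n), c = b ∘ ⇑σ} ⊆ U := by
      rintro c ⟨σ, rfl⟩
      have key := (hperm n b hb (Matrix.of fun i j => if σ.symm i = j then (1:ℝ) else 0)
        ⟨σ.symm, fun i j => rfl⟩ x).2
      rw [NDAux.vecMul_permMatrix b σ.symm, Equiv.symm_symm] at key
      exact key
    have : a ∈ U := convexHull_min hSU hUconv (NDAux.mem_convexHull_perms hmaj)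
    exact this
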